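/- Let Q be a quasigroup satisfying the identity ((xy)z)y = x(y(zy)) for all x, y, z. Suppose μ is a nonzero measure on Q that is invariant under all right translations, i.e., (R_a)_* μ = μ for all a, and quasi-invariant under left translations with cocycle j : Q → ℝ_{>0}, i.e., (L_a)_* μ = j(a) • μ. Then j(xy) = j(x)j(y) for all x, y. -/

import Mathlib

open MeasureTheory

/-- If μ is right-invariant and left quasi-invariant on a quasigroup satisfying
the Moufang-type identity (N1), then the left cocycle is multiplicative. -/
theorem cocycle_multiplicative_right_invariant {Q : Type*} [Mul Q] [MeasurableSpace Q]
    (hL : ∀ a b : Q, ∃! x : Q, a * x = b)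
    (hR : ∀ a b : Q, ∃! y : Q, y * a = b)
    (moufang : ∀ x y z : Q, ((x * y) * z) * y = x * (y * (z * y)))
    (hmeasL : ∀ a : Q, Measurable (fun x : Q => a * x))
    (hmeasR : ∀ a : Q, Measurable (fun x : Q => x * a))
    (μ : Measure Q)
    (hμ : ∃ E : Set Q, MeasurableSet E ∧ 0 < μ E ∧ μ E < ⊤)
    (hRinv : ∀ a : Q, Measure.map (fun x : Q => x * a) μ = μ)
    (j : Q → ℝ) (hjpos : ∀ a, 0 < j a)
    (hj : ∀ a : Q, Measure.map (fun x : Q => a * x) μ = ENNReal.ofReal (j a) • μ) :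
    ∀ x y : Q, j (x * y) = j x * j y := by
  intro x y
  have h1 : Measure.map (fun z : Q => ((x * y) * z) * y) μ
      = ENNReal.ofReal (j (x * y)) • μ := by
    have hc : (fun z : Q => ((x * y) * z) * y)
        = (fun w : Q => w * y) ∘ (fun z : Q => (x * y) * z) := rfl
    rw [hc, ← Measure.map_map (hmeasR y) (hmeasL (x * y)), hj,
      Measure.map_smul, hRinv]
  have h2 : Measure.map (fun z : Q => x * (y * (z * y))) μ
      = (ENNReal.ofReal (j x) * ENNReal.ofReal (j y)) • μ := by
    have hc : (fun z : Q => x * (y * (z * y)))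
        = (fun w : Q => x * w) ∘ ((fun w : Q => y * w) ∘ (fun z : Q => z * y)) := rfl
    rw [hc, ← Measure.map_map (hmeasL x) ((hmeasL y).comp (hmeasR y)),
      ← Measure.map_map (hmeasL y) (hmeasR y), hRinv, hj, Measure.map_smul,
      hj, smul_smul, mul_comm]
  have hfun : (fun z : Q => ((x * y) * z) * y) = fun z : Q => x * (y * (z * y)) :=
    funext (moufang x y)
  have key : ENNReal.ofReal (j (x * y)) • μ
      = (ENNReal.ofReal (j x) * ENNReal.ofReal (j y)) • μ := by
    rw [← h1, hfun, h2]
  obtain ⟨E, hE, hpos, hfin⟩ := hμ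
  have hEeq : ENNReal.ofReal (j (x * y)) * μ E
      = (ENNReal.ofReal (j x) * ENNReal.ofReal (j y)) * μ E := by
    have := congrArg (fun m : Measure Q => m E) key
    simpa [Measure.smul_apply, smul_eq_mul] using this
  have hcancel : ENNReal.ofReal (j (x * y))
      = ENNReal.ofReal (j x) * ENNReal.ofReal (j y) := by
    have hμE0 : μ E ≠ 0 := hpos.ne'
    have hμEtop : μ E ≠ ⊤ := hfin.ne
    exact (ENNReal.mul_left_inj hμE0 hμEtop).mp hEeq
  rw [← ENNReal.ofReal_mul (hjpos x).le] at hcancel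
  exact ENNReal.ofReal_eq_ofReal_iff (hjpos _).le
    (mul_nonneg (hjpos x).le (hjpos y).le) |>.mp hcancel
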